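/- Let P(s) = a s² + b s + c be a quadratic polynomial with a ≠ 0, with two simple roots s₁ ≠ s₂. If a function w(ρ) = Σ_{i=1}^N ρ^{s_i} Σ_{p=0}^{p_i} c_{ip} (log ρ)^p (with all exponents s_i having the same real part μ and imaginary parts distinct) satisfies L w = a(ρ∂_ρ)²w + b(ρ∂_ρ)w + c w = o(ρ^μ) as ρ → 0 together with all ρ∂_ρ-derivatives, then for each i with P(s_i) ≠ 0 all coefficients c_{ip} vanish, and for each i with P(s_i) = 0 all coefficients c_{ip} with p ≥ 1 vanish. -/

import Mathlib

open Filter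

/-- The operator `ρ ∂_ρ` acting on complex-valued functions of a real variable. -/
noncomputable def rhoD (f : ℝ → ℂ) : ℝ → ℂ := fun ρ => (ρ : ℂ) * deriv f ρ

namespace Stmt3Aux
open Complex

variable {N : ℕ}

/-- exponential-polynomial function of a real variable -/
noncomputable def EP (D : ℕ) (z : Fin N → ℂ) (v : Fin N → ℕ → ℂ) : ℝ → ℂ :=
  fun x => ∑ i, Complex.exp (z i * x) * ∑ p ∈ Finset.range D, v i p * (x:ℂ)^p

def Dop (z : Fin N → ℂ) (v : Fin N → ℕ → ℂ) : Fin N → ℕ → ℂ :=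
  fun i p => z i * v i p + (p+1) * v i (p+1)

def Supp (D : ℕ) (v : Fin N → ℕ → ℂ) : Prop := ∀ i p, D ≤ p → v i p = 0

lemma supp_dop {D : ℕ} {z : Fin N → ℂ} {v} (hv : Supp D v) : Supp D (Dop z v) := by
  intro i p hp
  simp [Dop, hv i p hp, hv i (p+1) (hp.trans (Nat.le_succ p))]

lemma supp_dop_iterate {D : ℕ} {z : Fin N → ℂ} {v} (hv : Supp D v) (k : ℕ) :
    Supp D ((Dop z)^[k] v) := by
  induction k with
  | zero => exact hv
  | succ k ih => rw [Function.iterate_succ_apply']; exact supp_dop ih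

lemma hasDerivAt_EP {D : ℕ} {z : Fin N → ℂ} {v} (hv : Supp D v) (x : ℝ) :
    HasDerivAt (EP D z v) (EP D z (Dop z v) x) x := by
  have hbase : ∀ (i : Fin N), HasDerivAt (fun x : ℝ => Complex.exp (z i * x))
      (Complex.exp (z i * x) * z i) x := by
    intro i
    have h0 : HasDerivAt (fun x : ℝ => (z i) * (x:ℂ)) (z i) x := by
      simpa using (Complex.ofRealCLM.hasDerivAt (x := x)).const_mul (z i)
    exact h0.cexp
  have hpow : ∀ (p : ℕ), HasDerivAt (fun x : ℝ => ((x:ℂ))^p) (p * (x:ℂ)^(p-1)) x := by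
    intro p
    exact (hasDerivAt_pow p ((x:ℂ))).comp_ofReal
  have hterm : ∀ i : Fin N, HasDerivAt
      (fun x : ℝ => Complex.exp (z i * x) * ∑ p ∈ Finset.range D, v i p * (x:ℂ)^p)
      (Complex.exp (z i * x) * ∑ p ∈ Finset.range D, (Dop z v) i p * (x:ℂ)^p) x := by
    intro i
    have hsum : HasDerivAt (fun x : ℝ => ∑ p ∈ Finset.range D, v i p * (x:ℂ)^p)
        (∑ p ∈ Finset.range D, v i p * (p * (x:ℂ)^(p-1))) x :=
      HasDerivAt.fun_sum (fun p _ => (hpow p).const_mul (v i p))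
    have h := ((hbase i).mul hsum)
    refine HasDerivAt.congr_deriv h ?_
    have key : ∑ p ∈ Finset.range D, ((p:ℂ)+1) * v i (p+1) * (x:ℂ)^p
        = ∑ p ∈ Finset.range D, v i p * ((p:ℂ) * (x:ℂ)^(p-1)) := by
      cases D with
      | zero => simp
      | succ n =>
        rw [Finset.sum_range_succ, Finset.sum_range_succ']
        rw [hv i (n+1) le_rfl]
        simp only [mul_zero, zero_mul, add_zero, Nat.cast_zero, Nat.add_sub_cancel, Nat.cast_add, Nat.cast_one]
        apply Finset.sum_congr rfl
        intro p _
        ring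
    have h2 : ∑ p ∈ Finset.range D, (Dop z v) i p * (x:ℂ)^p
        = z i * ∑ p ∈ Finset.range D, v i p * (x:ℂ)^p
          + ∑ p ∈ Finset.range D, ((p:ℂ)+1) * v i (p+1) * (x:ℂ)^p := by
      rw [Finset.mul_sum, ← Finset.sum_add_distrib]
      exact Finset.sum_congr rfl fun p _ => by simp only [Dop]; ring
    rw [h2, key]
    ring
  have := HasDerivAt.fun_sum (fun i (_ : i ∈ Finset.univ) => hterm i)
  exact this


/-- If two functions agree on an open set, all rhoD-iterates agree there. -/
lemma rhoD_iterate_congr {f g : ℝ → ℂ} {S : Set ℝ} (hS : IsOpen S)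
    (h : ∀ x ∈ S, f x = g x) (k : ℕ) : ∀ x ∈ S, rhoD^[k] f x = rhoD^[k] g x := by
  induction k with
  | zero => exact h
  | succ k ih =>
    intro x hx
    rw [Function.iterate_succ_apply', Function.iterate_succ_apply']
    unfold rhoD
    congr 1
    exact Filter.EventuallyEq.deriv_eq
      (Filter.eventuallyEq_of_mem (hS.mem_nhds hx) ih)

lemma rhoD_EP_log {D : ℕ} {z : Fin N → ℂ} {v} (hv : Supp D v) {ρ : ℝ} (hρ : ρ ≠ 0) :
    rhoD (fun t => EP D z v (Real.log t)) ρ = EP D z (Dop z v) (Real.log ρ) := by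
  have h1 : HasDerivAt (fun t => EP D z v (Real.log t))
      (ρ⁻¹ • EP D z (Dop z v) (Real.log ρ)) ρ :=
    (hasDerivAt_EP hv (Real.log ρ)).scomp ρ (Real.hasDerivAt_log hρ)
  unfold rhoD
  rw [h1.deriv]
  rw [Complex.real_smul, Complex.ofReal_inv, ← mul_assoc,
    mul_inv_cancel₀ (Complex.ofReal_ne_zero.mpr hρ), one_mul]

lemma rhoD_iterate_EP_log {D : ℕ} {z : Fin N → ℂ} {v} (hv : Supp D v) (k : ℕ) :
    ∀ ρ : ℝ, 0 < ρ → rhoD^[k] (fun t => EP D z v (Real.log t)) ρ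
      = EP D z ((Dop z)^[k] v) (Real.log ρ) := by
  induction k with
  | zero => intro ρ _; rfl
  | succ k ih =>
    intro ρ hρ
    rw [Function.iterate_succ_apply']
    have heq : ∀ t ∈ Set.Ioi (0:ℝ), rhoD^[k] (fun t => EP D z v (Real.log t)) t
        = (fun t => EP D z ((Dop z)^[k] v) (Real.log t)) t := fun t ht => ih t ht
    have : rhoD (rhoD^[k] (fun t => EP D z v (Real.log t))) ρ
        = rhoD (fun t => EP D z ((Dop z)^[k] v) (Real.log t)) ρ := by
      unfold rhoD
      congr 1
      exact Filter.EventuallyEq.deriv_eq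
        (Filter.eventuallyEq_of_mem (isOpen_Ioi.mem_nhds hρ) heq)
    rw [this, rhoD_EP_log (supp_dop_iterate hv k) (ne_of_gt hρ),
      ← Function.iterate_succ_apply' (Dop z) k v]


/-! ### The Good predicate and linearity -/

def Good (D : ℕ) (z : Fin N → ℂ) (v : Fin N → ℕ → ℂ) : Prop :=
  ∀ k : ℕ, Tendsto (EP D z ((Dop z)^[k] v)) atBot (nhds 0)

lemma dop_add (z : Fin N → ℂ) (v w : Fin N → ℕ → ℂ) :
    Dop z (v + w) = Dop z v + Dop z w := by
  funext i p; simp [Dop]; ring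

lemma dop_smul (z : Fin N → ℂ) (c : ℂ) (v : Fin N → ℕ → ℂ) :
    Dop z (c • v) = c • Dop z v := by
  funext i p; simp [Dop]; ring

lemma dop_iterate_add (z : Fin N → ℂ) (v w : Fin N → ℕ → ℂ) (k : ℕ) :
    (Dop z)^[k] (v + w) = (Dop z)^[k] v + (Dop z)^[k] w := by
  induction k with
  | zero => rfl
  | succ k ih =>
    rw [Function.iterate_succ_apply', Function.iterate_succ_apply',
      Function.iterate_succ_apply', ih, dop_add]

lemma dop_iterate_smul (z : Fin N → ℂ) (c : ℂ) (v : Fin N → ℕ → ℂ) (k : ℕ) :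
    (Dop z)^[k] (c • v) = c • (Dop z)^[k] v := by
  induction k with
  | zero => rfl
  | succ k ih =>
    rw [Function.iterate_succ_apply', Function.iterate_succ_apply', ih, dop_smul]

lemma EP_add (D : ℕ) (z : Fin N → ℂ) (v w : Fin N → ℕ → ℂ) (x : ℝ) :
    EP D z (v + w) x = EP D z v x + EP D z w x := by
  simp only [EP, Pi.add_apply, add_mul, Finset.sum_add_distrib, mul_add]

lemma EP_smul (D : ℕ) (z : Fin N → ℂ) (c : ℂ) (v : Fin N → ℕ → ℂ) (x : ℝ) :
    EP D z (c • v) x = c * EP D z v x := by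
  simp only [EP, Pi.smul_apply, smul_eq_mul, Finset.mul_sum]
  apply Finset.sum_congr rfl
  intro i _
  exact Finset.sum_congr rfl fun p _ => by ring

lemma good_dop {D : ℕ} {z : Fin N → ℂ} {v} (h : Good D z v) : Good D z (Dop z v) := by
  intro k
  have := h (k+1)
  rwa [Function.iterate_succ_apply] at this

lemma good_add {D : ℕ} {z : Fin N → ℂ} {v w} (hv : Good D z v) (hw : Good D z w) :
    Good D z (v + w) := by
  intro k
  have : EP D z ((Dop z)^[k] (v + w))
      = fun x => EP D z ((Dop z)^[k] v) x + EP D z ((Dop z)^[k] w) x := by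
    funext x; rw [dop_iterate_add, EP_add]
  rw [this]
  simpa using (hv k).add (hw k)

lemma good_smul {D : ℕ} {z : Fin N → ℂ} (c : ℂ) {v} (hv : Good D z v) :
    Good D z (c • v) := by
  intro k
  have : EP D z ((Dop z)^[k] (c • v))
      = fun x => c * EP D z ((Dop z)^[k] v) x := by
    funext x; rw [dop_iterate_smul, EP_smul]
  rw [this]
  simpa using (hv k).const_mul c

/-! ### The shifted operator -/

def Aop (z : Fin N → ℂ) (l : ℂ) (v : Fin N → ℕ → ℂ) : Fin N → ℕ → ℂ :=
  fun i p => (z i - l) * v i p + (p+1) * v i (p+1)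

lemma aop_eq (z : Fin N → ℂ) (l : ℂ) (v : Fin N → ℕ → ℂ) :
    Aop z l v = Dop z v + (-l) • v := by
  funext i p; simp [Aop, Dop]; ring

lemma good_aop {D : ℕ} {z : Fin N → ℂ} (l : ℂ) {v} (hv : Good D z v) :
    Good D z (Aop z l v) := by
  rw [aop_eq]
  exact good_add (good_dop hv) (good_smul _ hv)

lemma good_aop_iterate {D : ℕ} {z : Fin N → ℂ} (l : ℂ) {v} (hv : Good D z v) (k : ℕ) :
    Good D z ((Aop z l)^[k] v) := by
  induction k with
  | zero => exact hv
  | succ k ih => rw [Function.iterate_succ_apply']; exact good_aop l ih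

lemma supp_aop {D : ℕ} {z : Fin N → ℂ} (l : ℂ) {v} (hv : Supp D v) :
    Supp D (Aop z l v) := by
  intro i p hp
  simp [Aop, hv i p hp, hv i (p+1) (hp.trans (Nat.le_succ p))]

lemma supp_aop_iterate {D : ℕ} {z : Fin N → ℂ} (l : ℂ) {v} (hv : Supp D v) (k : ℕ) :
    Supp D ((Aop z l)^[k] v) := by
  induction k with
  | zero => exact hv
  | succ k ih => rw [Function.iterate_succ_apply']; exact supp_aop l ih

/-- `Aop` acts componentwise: a zero component stays zero. -/
lemma aop_iterate_comp_zero {z : Fin N → ℂ} (l : ℂ) {v} {j : Fin N}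
    (h : ∀ q, v j q = 0) (k : ℕ) : ∀ q, ((Aop z l)^[k] v) j q = 0 := by
  induction k with
  | zero => exact h
  | succ k ih =>
    intro q
    rw [Function.iterate_succ_apply']
    simp [Aop, ih q, ih (q+1)]

/-- Applying `Aop z (z j)` D times kills component `j`. -/
lemma aop_kill {D : ℕ} {z : Fin N → ℂ} {j : Fin N} {v} (hv : Supp D v) :
    ∀ k q, D ≤ q + k → ((Aop z (z j))^[k] v) j q = 0 := by
  intro k
  induction k with
  | zero => intro q hq; exact hv j q (by simpa using hq)
  | succ k ih =>
    intro q hq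
    rw [Function.iterate_succ_apply']
    have h1 : ((Aop z (z j))^[k] v) j (q+1) = 0 := ih (q+1) (by omega)
    simp [Aop, h1]

/-- Above-p vanishing is preserved and the p-coefficient evolves diagonally. -/
lemma aop_iterate_diag {z : Fin N → ℂ} (l : ℂ) {v} {i : Fin N} {p : ℕ}
    (h : ∀ p', p < p' → v i p' = 0) (k : ℕ) :
    (∀ p', p < p' → ((Aop z l)^[k] v) i p' = 0) ∧
      ((Aop z l)^[k] v) i p = (z i - l)^k * v i p := by
  induction k with
  | zero => exact ⟨h, by simp⟩
  | succ k ih =>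
    constructor
    · intro p' hp'
      rw [Function.iterate_succ_apply']
      simp [Aop, ih.1 p' hp', ih.1 (p'+1) (by omega)]
    · rw [Function.iterate_succ_apply']
      simp only [Aop, ih.1 (p+1) (by omega), ih.2, mul_zero, add_zero, pow_succ]
      ring

/-- The pure-shift formula for `Aop z (z i)` on component `i`. -/
lemma aop_shift {z : Fin N → ℂ} {i : Fin N} (v : Fin N → ℕ → ℂ) (k : ℕ) (q : ℕ) :
    ((Aop z (z i))^[k] v) i q = (∏ t ∈ Finset.range k, ((q:ℂ) + t + 1)) * v i (q + k) := by
  induction k generalizing q v with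
  | zero => simp
  | succ k ih =>
    rw [Function.iterate_succ_apply]
    rw [ih]
    have h1 : (Aop z (z i) v) i (q + k) = ((q:ℂ) + k + 1) * v i (q + k + 1) := by
      simp only [Aop, sub_self, zero_mul, zero_add]
      push_cast
      ring
    rw [h1, Finset.prod_range_succ]
    exact (mul_assoc _ _ _).symm


lemma kill {D : ℕ} {z : Fin N → ℂ} {i : Fin N} {p : ℕ}
    (S : Finset (Fin N)) (hiS : i ∉ S) {v} (hv : Supp D v) (hg : Good D z v)
    (hab : ∀ p', p < p' → v i p' = 0) :
    ∃ w, Supp D w ∧ Good D z w ∧ (∀ j ∈ S, ∀ q, w j q = 0) ∧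
      (∀ p', p < p' → w i p' = 0) ∧ w i p = (∏ j ∈ S, (z i - z j)^D) * v i p := by
  classical
  induction S using Finset.induction_on with
  | empty => exact ⟨v, hv, hg, by simp, hab, by simp⟩
  | @insert j S hjS ih =>
    obtain ⟨w, hw, hgw, hzero, habw, hdiag⟩ := ih (fun h => hiS (Finset.mem_insert_of_mem h))
    have hij : i ≠ j := fun h => hiS (h ▸ Finset.mem_insert_self j S)
    refine ⟨(Aop z (z j))^[D] w, supp_aop_iterate _ hw D, good_aop_iterate _ hgw D,
      ?_, (aop_iterate_diag (z j) habw D).1, ?_⟩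
    · intro j' hj' q
      rcases Finset.mem_insert.mp hj' with h | h
      · subst h
        exact aop_kill hw D q (Nat.le_add_left D q)
      · exact aop_iterate_comp_zero _ (hzero j' h) D q
    · rw [(aop_iterate_diag (z j) habw D).2, hdiag,
        Finset.prod_insert hjS]
      ring

theorem key {D : ℕ} {z : Fin N → ℂ} (hre : ∀ i, (z i).re = 0)
    (hinj : Function.Injective z) :
    ∀ v, Supp D v → Good D z v → ∀ (i : Fin N) (p : ℕ), v i p = 0 := by
  classical
  have claim : ∀ k : ℕ, ∀ v, Supp D v → Good D z v →
      ∀ (i : Fin N) (p : ℕ), D ≤ p + k → v i p = 0 := by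
    intro k
    induction k with
    | zero => intro v hv _ i p hp; exact hv i p (by simpa using hp)
    | succ k ih =>
      intro v hv hg i p hp
      rcases le_or_gt D (p + k) with h | h
      · exact ih v hv hg i p h
      · -- p + k + 1 = D in particular D ≥ 1
        have hD : 0 < D := by omega
        have hab : ∀ p', p < p' → v i p' = 0 := by
          intro p' hp'
          exact ih v hv hg i p' (by omega)
        obtain ⟨w, hw, hgw, hzero, habw, hdiag⟩ :=
          kill (Finset.univ.erase i) (Finset.notMem_erase i _) hv hg hab
        -- now shift down p times
        set w' := (Aop z (z i))^[p] w with hw'def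
        have hw'i : ∀ q, 1 ≤ q → w' i q = 0 := by
          intro q hq
          rw [hw'def, aop_shift]
          rw [habw (q + p) (by omega), mul_zero]
        have hw'j : ∀ j, j ≠ i → ∀ q, w' j q = 0 := by
          intro j hj q
          exact aop_iterate_comp_zero _
            (hzero j (Finset.mem_erase.mpr ⟨hj, Finset.mem_univ j⟩)) p q
        have hw'0 : w' i 0 = (∏ t ∈ Finset.range p, ((0:ℂ) + t + 1)) *
            ((∏ j ∈ Finset.univ.erase i, (z i - z j)^D) * v i p) := by
          rw [hw'def, aop_shift]
          rw [Nat.zero_add, hdiag]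
          norm_num
        have hgw' : Good D z w' := good_aop_iterate _ hgw p
        -- EP of w' is exp(z i x) * (w' i 0)
        have hEP : ∀ x : ℝ, EP D z w' x = Complex.exp (z i * x) * w' i 0 := by
          intro x
          unfold EP
          rw [Finset.sum_eq_single i]
          · congr 1
            rw [Finset.sum_eq_single 0]
            · simp
            · intro q _ hq
              rw [hw'i q (Nat.one_le_iff_ne_zero.mpr hq), zero_mul]
            · intro h0
              exact absurd (Finset.mem_range.mpr hD) h0
          · intro j _ hj
            have : ∀ q ∈ Finset.range D, w' j q * (x:ℂ)^q = 0 := by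
              intro q _
              rw [hw'j j hj q, zero_mul]
            rw [Finset.sum_eq_zero this, mul_zero]
          · intro h; exact absurd (Finset.mem_univ i) h
        -- tendsto argument
        have ht : Tendsto (fun x : ℝ => Complex.exp (z i * x) * w' i 0) atBot (nhds 0) := by
          have := hgw' 0
          simpa [Function.iterate_zero, hEP] using this.congr hEP
        have hC : w' i 0 = 0 := by
          have hnorm : ∀ x : ℝ, ‖Complex.exp (z i * x) * w' i 0‖ = ‖w' i 0‖ := by
            intro x
            rw [norm_mul]
            have : ‖Complex.exp (z i * x)‖ = 1 := by
              rw [Complex.norm_exp]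
              have : (z i * x).re = 0 := by
                simp [Complex.mul_re, hre i]
              rw [this, Real.exp_zero]
            rw [this, one_mul]
          have h2 : Tendsto (fun _ : ℝ => ‖w' i 0‖) atBot (nhds 0) := by
            have := ht.norm
            simpa [hnorm] using this.congr hnorm
          have h3 := tendsto_nhds_unique h2 (tendsto_const_nhds (α := ℝ) (f := atBot))
          exact norm_eq_zero.mp h3.symm
        -- extract v i p = 0
        rw [hw'0] at hC
        have hf1 : (∏ t ∈ Finset.range p, ((0:ℂ) + t + 1)) ≠ 0 := by
          apply Finset.prod_ne_zero_iff.mpr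
          intro t _
          rw [zero_add]
          exact Nat.cast_add_one_ne_zero t
        have hf2 : (∏ j ∈ Finset.univ.erase i, (z i - z j)^D) ≠ 0 := by
          apply Finset.prod_ne_zero_iff.mpr
          intro j hj
          apply pow_ne_zero
          rw [sub_ne_zero]
          exact fun h => (Finset.mem_erase.mp hj).1 (hinj h.symm)
        rcases mul_eq_zero.mp hC with h1 | h1
        · exact absurd h1 hf1
        rcases mul_eq_zero.mp h1 with h2 | h2
        · exact absurd h2 hf2
        · exact h2
  intro v hv hg i p
  exact claim D v hv hg i p (Nat.le_add_left D p)


lemma EP_shift (D : ℕ) (z : Fin N → ℂ) (m : ℂ) (v : Fin N → ℕ → ℂ) (x : ℝ) :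
    Complex.exp (-m * x) * EP D z v x = EP D (fun i => z i - m) v x := by
  unfold EP
  rw [Finset.mul_sum]
  apply Finset.sum_congr rfl
  intro i _
  rw [← mul_assoc, ← Complex.exp_add]
  congr 2
  ring

end Stmt3Aux

open Stmt3Aux in
theorem stmt3 (a b c : ℂ) (ha : a ≠ 0) (s₁ s₂ : ℂ) (hne : s₁ ≠ s₂)
    (hroots : ∀ z : ℂ, a * z ^ 2 + b * z + c = a * (z - s₁) * (z - s₂))
    (N : ℕ) (s : Fin N → ℂ) (μ : ℝ) (hre : ∀ i, (s i).re = μ)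
    (him : Function.Injective fun i : Fin N => (s i).im)
    (pdeg : Fin N → ℕ) (cc : Fin N → ℕ → ℂ)
    (w : ℝ → ℂ)
    (hw : ∀ ρ : ℝ, 0 < ρ → ρ < 1 →
      w ρ = ∑ i, (ρ : ℂ) ^ (s i) *
        ∑ p ∈ Finset.range (pdeg i + 1), cc i p * ((Real.log ρ : ℂ)) ^ p)
    (Lw : ℝ → ℂ)
    (hLw : ∀ ρ : ℝ, Lw ρ = a * rhoD (rhoD w) ρ + b * rhoD w ρ + c * w ρ)
    (hsmall : ∀ k : ℕ,
      Tendsto (rhoD^[k] (fun ρ : ℝ => ((ρ ^ (-μ) : ℝ) : ℂ) * Lw ρ))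
        (nhdsWithin 0 (Set.Ioi 0)) (nhds 0)) :
    ∀ i, ∀ p ≤ pdeg i,
      ((a * (s i) ^ 2 + b * (s i) + c ≠ 0) → cc i p = 0) ∧
      (1 ≤ p → a * (s i) ^ 2 + b * (s i) + c = 0 → cc i p = 0) := by
  classical
  set D : ℕ := (Finset.univ.sup pdeg) + 1 with hDdef
  set v : Fin N → ℕ → ℂ := fun i p => if p ≤ pdeg i then cc i p else 0 with hvdef
  have hpdegD : ∀ i, pdeg i < D := fun i =>
    Nat.lt_succ_of_le (Finset.le_sup (Finset.mem_univ i))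
  have hsupp : Supp D v := by
    intro i p hp
    have := hpdegD i
    simp only [hvdef]
    rw [if_neg (by omega)]
  -- step 1 : w coincides with the canonical exponential polynomial on (0,1)
  have hw1 : ∀ ρ ∈ Set.Ioo (0:ℝ) 1, w ρ = (fun t => EP D s v (Real.log t)) ρ := by
    intro ρ hρ
    rw [hw ρ hρ.1 hρ.2]
    unfold EP
    apply Finset.sum_congr rfl
    intro i _
    congr 1
    · rw [Complex.cpow_def_of_ne_zero (Complex.ofReal_ne_zero.mpr (ne_of_gt hρ.1)),
        ← Complex.ofReal_log hρ.1.le, mul_comm]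
    · rw [← Finset.sum_subset (Finset.range_subset_range.mpr (hpdegD i))]
      apply Finset.sum_congr rfl
      intro p hp
      rw [hvdef]
      simp only
      rw [if_pos (Nat.lt_succ_iff.mp (Finset.mem_range.mp hp))]
      · intro p hp hnp
        have h1 : ¬ p ≤ pdeg i := fun h => hnp (Finset.mem_range.mpr (Nat.lt_succ_of_le h))
        rw [hvdef]
        simp only
        rw [if_neg h1, zero_mul]
  -- the coefficient function of ρ^{-μ} L w
  set q : Fin N → ℕ → ℂ :=
    fun i p => a * (Dop s (Dop s v)) i p + b * (Dop s v) i p + c * v i p with hqdef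
  have hqsupp : Supp D q := by
    intro i p hp
    simp only [hqdef]
    rw [supp_dop (supp_dop hsupp) i p hp, supp_dop hsupp i p hp, hsupp i p hp]
    ring
  have hEPq : ∀ x : ℝ, EP D s q x
      = a * EP D s (Dop s (Dop s v)) x + b * EP D s (Dop s v) x + c * EP D s v x := by
    intro x
    unfold EP
    simp only [Finset.mul_sum, ← Finset.sum_add_distrib]
    apply Finset.sum_congr rfl
    intro i _
    apply Finset.sum_congr rfl
    intro p _
    simp only [hqdef]
    ring
  -- rhoD iterates of w
  have hk : ∀ k, ∀ ρ ∈ Set.Ioo (0:ℝ) 1,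
      rhoD^[k] w ρ = EP D s ((Dop s)^[k] v) (Real.log ρ) := by
    intro k ρ hρ
    rw [rhoD_iterate_congr isOpen_Ioo hw1 k ρ hρ]
    exact rhoD_iterate_EP_log hsupp k ρ hρ.1
  set z : Fin N → ℂ := fun i => s i - (μ:ℂ) with hzdef
  -- step 2 : ρ^{-μ} Lw is the canonical exponential polynomial with coefficients q
  have hg1 : ∀ ρ ∈ Set.Ioo (0:ℝ) 1,
      (fun ρ : ℝ => ((ρ ^ (-μ) : ℝ) : ℂ) * Lw ρ) ρ = (fun t => EP D z q (Real.log t)) ρ := by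
    intro ρ hρ
    have e0 : w ρ = EP D s v (Real.log ρ) := hw1 ρ hρ
    have e1 : rhoD w ρ = EP D s (Dop s v) (Real.log ρ) := by
      simpa using hk 1 ρ hρ
    have e2 : rhoD (rhoD w) ρ = EP D s (Dop s (Dop s v)) (Real.log ρ) := by
      have := hk 2 ρ hρ
      rwa [Function.iterate_succ_apply, Function.iterate_one,
        Function.iterate_succ_apply, Function.iterate_one] at this
    have hrpow : ((ρ ^ (-μ) : ℝ) : ℂ) = Complex.exp (-(μ:ℂ) * (Real.log ρ : ℂ)) := by
      rw [Real.rpow_def_of_pos hρ.1, Complex.ofReal_exp]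
      congr 1
      push_cast
      ring
    simp only
    rw [hLw ρ, e0, e1, e2, hrpow, ← hEPq (Real.log ρ), EP_shift]
  -- step 3 : transfer the smallness hypothesis to the log variable
  have hgood : Good D z q := by
    intro k
    have h1 := hsmall k
    have h2 : ∀ ρ ∈ Set.Ioo (0:ℝ) 1,
        rhoD^[k] (fun ρ : ℝ => ((ρ ^ (-μ) : ℝ) : ℂ) * Lw ρ) ρ
          = EP D z ((Dop z)^[k] q) (Real.log ρ) := by
      intro ρ hρ
      rw [rhoD_iterate_congr isOpen_Ioo hg1 k ρ hρ]
      exact rhoD_iterate_EP_log hqsupp k ρ hρ.1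
    have h3 : Tendsto (fun ρ : ℝ => EP D z ((Dop z)^[k] q) (Real.log ρ))
        (nhdsWithin 0 (Set.Ioi 0)) (nhds 0) := by
      apply h1.congr'
      filter_upwards [Ioo_mem_nhdsGT_of_mem (Set.mem_Ico.mpr ⟨le_refl (0:ℝ), one_pos⟩)]
        with ρ hρ
      exact h2 ρ hρ
    have h4 := h3.comp Real.tendsto_exp_atBot_nhdsGT
    exact h4.congr fun x => by simp [Function.comp, Real.log_exp]
  -- step 4 : all coefficients of q vanish
  have hre0 : ∀ i, (z i).re = 0 := by
    intro i
    simp [hzdef, Complex.sub_re, Complex.ofReal_re, hre i]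
  have hinjz : Function.Injective z := by
    intro i j h
    apply him
    have : s i = s j := by
      have := sub_left_inj.mp h
      exact this
    simp only [this]
  have hq0 : ∀ i p, q i p = 0 := key hre0 hinjz q hqsupp hgood
  -- step 5 : algebra
  intro i p0 hp0
  have hqip : ∀ p : ℕ, (a * (s i)^2 + b * (s i) + c) * v i p
      + (2*a*(s i) + b) * ((p:ℂ)+1) * v i (p+1)
      + a * ((p:ℂ)+1) * ((p:ℂ)+2) * v i (p+2) = 0 := by
    intro p
    have h0 := hq0 i p
    simp only [hqdef, Dop] at h0
    push_cast at h0 ⊢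
    linear_combination h0
  have hccv : cc i p0 = v i p0 := by
    simp only [hvdef]
    rw [if_pos hp0]
  constructor
  · -- non-resonant case
    intro hPi
    have hall : ∀ k, ∀ p, D ≤ p + k → v i p = 0 := by
      intro k
      induction k with
      | zero => intro p hp; exact hsupp i p (by omega)
      | succ k ih =>
        intro p hp
        rcases le_or_gt D (p + k) with h | h
        · exact ih p h
        · have h1 := ih (p+1) (by omega)
          have h2 := ih (p+2) (by omega)
          have h3 := hqip p
          rw [h1, h2, mul_zero, mul_zero, add_zero, add_zero] at h3
          exact (mul_eq_zero.mp h3).resolve_left hPi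
    rw [hccv]
    exact hall D p0 (by omega)
  · -- resonant case : simple root
    intro hp1 hPi
    have hb : b = -a * (s₁ + s₂) := by
      have h2 := hroots 1
      have h3 := hroots (-1)
      linear_combination (h2 - h3) / 2
    have hP' : 2*a*(s i) + b ≠ 0 := by
      have hri : a * (s i - s₁) * (s i - s₂) = 0 := by
        rw [← hroots (s i)]; exact hPi
      rcases mul_eq_zero.mp hri with h0 | h0
      · rcases mul_eq_zero.mp h0 with h0 | h0
        · exact absurd h0 ha
        · have hsi : s i = s₁ := by linear_combination h0
          intro hcon
          have : a * (s₁ - s₂) = 0 := by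
            rw [hsi, hb] at hcon
            linear_combination hcon
          rcases mul_eq_zero.mp this with h | h
          · exact ha h
          · exact hne (by linear_combination h)
      · have hsi : s i = s₂ := by linear_combination h0
        intro hcon
        have : a * (s₂ - s₁) = 0 := by
          rw [hsi, hb] at hcon
          linear_combination hcon
        rcases mul_eq_zero.mp this with h | h
        · exact ha h
        · exact hne (by linear_combination -h)
    have hall : ∀ k, ∀ p, 1 ≤ p → D ≤ p + k → v i p = 0 := by
      intro k
      induction k with
      | zero => intro p _ hp; exact hsupp i p (by omega)
      | succ k ih =>
        intro p hp1' hp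
        rcases le_or_gt D (p + k) with h | h
        · exact ih p hp1' h
        · obtain ⟨m, rfl⟩ : ∃ m, p = m + 1 := ⟨p - 1, by omega⟩
          have h2 := ih (m+2) (by omega) (by omega)
          have h3 := hqip m
          rw [hPi, zero_mul, zero_add, h2, mul_zero, add_zero] at h3
          rcases mul_eq_zero.mp h3 with h4 | h4
          · rcases mul_eq_zero.mp h4 with h5 | h5
            · exact absurd h5 hP'
            · exact absurd h5 (Nat.cast_add_one_ne_zero m)
          · exact h4
    rw [hccv]
    exact hall D p0 hp1 (by omega)
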